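/- Let n ≥ 2 be an integer, let d_1, …, d_{n−1} be positive real numbers, let t_2, …, t_{n−1} be real numbers each satisfying t_j ≤ 0 or t_j ≥ 1, and let λ̄_1, …, λ̄_{n−1} be real numbers. If B_j^− ≤ λ̄_j ≤ B_j^+ for every 1 ≤ j ≤ n−1 (with the data-bounded initialization B_1^− = −d_1, B_1^+ = d_1), then for every s ∈ [0,1] one has 0 ≤ S_n(s) ≤ 1. -/

import Mathlib

set_option maxHeartbeats 1600000


/-- The expanded normalized Newton form
`S_n(s) = s + Σ_{j=1}^{n−1} (λ̄_j / (d_1⋯d_j)) · s·(s−1) · Π_{k=2}^{j} (s − t_k)`. -/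
noncomputable def Sn (n : ℕ) (d t lam : ℕ → ℝ) (s : ℝ) : ℝ :=
  s + ∑ j ∈ Finset.Icc 1 (n - 1),
    (lam j / ∏ k ∈ Finset.Icc 1 j, d k) * (s * (s - 1)) * ∏ k ∈ Finset.Icc 2 j, (s - t k)

/-- Data-bounded recursion: if the scaled divided-difference ratios `λ̄_j` lie within the
recursively defined bounds `B_j^±` with data-bounded initialization `B_1^∓ = ∓d_1`, then
`0 ≤ S_n(s) ≤ 1` on `[0,1]`. -/
theorem dbi_Sn_bounds
    (n : ℕ) (hn : 2 ≤ n)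
    (d t lam Bm Bp : ℕ → ℝ)
    (hd : ∀ j, 1 ≤ j → j ≤ n - 1 → 0 < d j)
    (ht : ∀ j, 2 ≤ j → j ≤ n - 1 → t j ≤ 0 ∨ 1 ≤ t j)
    (hBm1 : Bm 1 = -d 1)
    (hBp1 : Bp 1 = d 1)
    (hBrec : ∀ j, 2 ≤ j → j ≤ n - 1 →
      (t j ≤ 0 →
        Bm j = (Bm (j - 1) - lam (j - 1)) * d j / (1 - t j) ∧
        Bp j = (Bp (j - 1) - lam (j - 1)) * d j / (1 - t j)) ∧
      (1 ≤ t j →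
        Bm j = (Bp (j - 1) - lam (j - 1)) * d j / (-t j) ∧
        Bp j = (Bm (j - 1) - lam (j - 1)) * d j / (-t j)))
    (hlam : ∀ j, 1 ≤ j → j ≤ n - 1 → Bm j ≤ lam j ∧ lam j ≤ Bp j) :
    ∀ s ∈ Set.Icc (0 : ℝ) 1, 0 ≤ Sn n d t lam s ∧ Sn n d t lam s ≤ 1 := by
  intro s hs
  obtain ⟨hs0, hs1⟩ := hs
  set N := n - 1 with hNdef
  have hN1 : 1 ≤ N := by omega
  set g : ℕ → ℝ := fun k => (s - t k) / d k with hg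
  set U : ℕ → ℝ := fun m =>
    ∑ i ∈ Finset.Icc m N, lam i * ∏ k ∈ Finset.Icc (m + 1) i, g k with hU
  clear_value g U
  have hUN : U N = lam N := by
    simp [hU, Finset.Icc_self, Finset.Icc_eq_empty (by omega : ¬ N + 1 ≤ N)]
  have hrecU : ∀ m, m + 1 ≤ N → U m = lam m + g (m + 1) * U (m + 1) := by
    intro m hm
    have hmN : m ≤ N := by omega
    have hins : Finset.Icc m N = insert m (Finset.Icc (m + 1) N) := by
      rw [show Finset.Icc (m + 1) N = Finset.Ioc m N from Finset.Icc_add_one_left_eq_Ioc m N,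
        Finset.Ioc_insert_left hmN]
    have hnm : m ∉ Finset.Icc (m + 1) N := by simp
    rw [hU]
    simp only
    rw [hins, Finset.sum_insert hnm]
    have h1 : (∏ k ∈ Finset.Icc (m + 1) m, g k) = 1 := by
      rw [Finset.Icc_eq_empty (by omega)]; simp
    rw [h1, mul_one]
    congr 1
    rw [Finset.mul_sum]
    apply Finset.sum_congr rfl
    intro i hi
    have hi1 : m + 1 ≤ i := (Finset.mem_Icc.mp hi).1
    have hins2 : Finset.Icc (m + 1) i = insert (m + 1) (Finset.Icc (m + 2) i) := by
      rw [show Finset.Icc (m + 2) i = Finset.Ioc (m + 1) i from Finset.Icc_add_one_left_eq_Ioc (m + 1) i,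
        Finset.Ioc_insert_left hi1]
    rw [hins2, Finset.prod_insert (by simp)]
    ring
  have key : ∀ q m, 1 ≤ m → m ≤ N → N ≤ m + q → Bm m ≤ U m ∧ U m ≤ Bp m := by
    intro q
    induction q with
    | zero =>
      intro m h1 h2 h3
      have hmN : m = N := by omega
      rw [hmN, hUN]
      exact hlam N hN1 le_rfl
    | succ q ih =>
      intro m h1 h2 h3
      by_cases hc : N ≤ m + q
      · exact ih m h1 h2 hc
      · have hm1 : m + 1 ≤ N := by omega
        obtain ⟨ihm, ihp⟩ := ih (m + 1) (by omega) hm1 (by omega)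
        have hrecm := hrecU m hm1
        obtain ⟨u, hu⟩ : ∃ u, U (m + 1) = u := ⟨_, rfl⟩
        rw [hu] at ihm ihp hrecm
        have hj2 : 2 ≤ m + 1 := by omega
        have hdj : 0 < d (m + 1) := hd (m + 1) (by omega) hm1
        have hBj := hBrec (m + 1) hj2 hm1
        have hjm : m + 1 - 1 = m := by omega
        obtain ⟨hl, hr⟩ := hlam m h1 (by omega)
        have egj : g (m + 1) * d (m + 1) = s - t (m + 1) := by
          rw [hg]; field_simp
        rcases ht (m + 1) hj2 hm1 with htj | htj
        · obtain ⟨e1, e2⟩ := hBj.1 htj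
          rw [hjm] at e1 e2
          have hM : (0:ℝ) < 1 - t (m + 1) := by linarith
          have eBm : Bm (m + 1) * (1 - t (m + 1)) = (Bm m - lam m) * d (m + 1) := by
            rw [e1]; field_simp
          have eBp : Bp (m + 1) * (1 - t (m + 1)) = (Bp m - lam m) * d (m + 1) := by
            rw [e2]; field_simp
          have hBmj0 : Bm (m + 1) ≤ 0 := by nlinarith
          have hBpj0 : 0 ≤ Bp (m + 1) := by nlinarith
          have hst0 : (0:ℝ) ≤ s - t (m + 1) := by linarith
          have hst1 : s - t (m + 1) ≤ 1 - t (m + 1) := by linarith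
          constructor
          · rw [hrecm]
            have h1' : (s - t (m + 1)) * Bm (m + 1) ≤ (s - t (m + 1)) * u :=
              mul_le_mul_of_nonneg_left ihm hst0
            have h2' : (1 - t (m + 1)) * Bm (m + 1) ≤ (s - t (m + 1)) * Bm (m + 1) := by
              nlinarith
            nlinarith
          · rw [hrecm]
            have h1' : (s - t (m + 1)) * u ≤ (s - t (m + 1)) * Bp (m + 1) :=
              mul_le_mul_of_nonneg_left ihp hst0
            have h2' : (s - t (m + 1)) * Bp (m + 1) ≤ (1 - t (m + 1)) * Bp (m + 1) := by
              nlinarith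
            nlinarith
        · obtain ⟨e1, e2⟩ := hBj.2 htj
          rw [hjm] at e1 e2
          have hM : (0:ℝ) < t (m + 1) := by linarith
          have eBm : Bm (m + 1) * (-t (m + 1)) = (Bp m - lam m) * d (m + 1) := by
            rw [e1]; field_simp
          have eBp : Bp (m + 1) * (-t (m + 1)) = (Bm m - lam m) * d (m + 1) := by
            rw [e2]; field_simp
          have hBmj0 : Bm (m + 1) ≤ 0 := by nlinarith
          have hBpj0 : 0 ≤ Bp (m + 1) := by nlinarith
          have hst0 : s - t (m + 1) ≤ 0 := by linarith
          have hst1 : -t (m + 1) ≤ s - t (m + 1) := by linarith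
          constructor
          · rw [hrecm]
            have h1' : (s - t (m + 1)) * Bp (m + 1) ≤ (s - t (m + 1)) * u :=
              mul_le_mul_of_nonpos_left ihp hst0
            have h2' : (-t (m + 1)) * Bp (m + 1) ≤ (s - t (m + 1)) * Bp (m + 1) := by
              nlinarith
            nlinarith
          · rw [hrecm]
            have h1' : (s - t (m + 1)) * u ≤ (s - t (m + 1)) * Bm (m + 1) :=
              mul_le_mul_of_nonpos_left ihm hst0
            have h2' : (s - t (m + 1)) * Bm (m + 1) ≤ (-t (m + 1)) * Bm (m + 1) := by
              nlinarith
            nlinarith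
  obtain ⟨hU1m, hU1p⟩ := key N 1 le_rfl hN1 (by omega)
  rw [hBm1] at hU1m
  rw [hBp1] at hU1p
  have hd1 : 0 < d 1 := hd 1 le_rfl hN1
  have hSn : Sn n d t lam s = s + (s * (s - 1) / d 1) * U 1 := by
    rw [Sn, hU]
    simp only
    congr 1
    rw [Finset.mul_sum]
    apply Finset.sum_congr rfl
    intro j hj
    obtain ⟨hj1, hjN⟩ := Finset.mem_Icc.mp hj
    have hdprod : ∏ k ∈ Finset.Icc 1 j, d k = d 1 * ∏ k ∈ Finset.Icc 2 j, d k := by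
      rw [show Finset.Icc 1 j = insert 1 (Finset.Icc 2 j) from by
        rw [show Finset.Icc 2 j = Finset.Ioc 1 j from Finset.Icc_add_one_left_eq_Ioc 1 j,
          Finset.Ioc_insert_left hj1],
        Finset.prod_insert (by simp)]
    have hPne : (∏ k ∈ Finset.Icc 2 j, d k) ≠ 0 := by
      apply Finset.prod_ne_zero_iff.mpr
      intro k hk
      obtain ⟨hk2, hkj⟩ := Finset.mem_Icc.mp hk
      exact ne_of_gt (hd k (by omega) (by omega))
    have hgprod : ∏ k ∈ Finset.Icc 2 j, g k
        = (∏ k ∈ Finset.Icc 2 j, (s - t k)) / ∏ k ∈ Finset.Icc 2 j, d k := by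
      rw [hg]
      rw [Finset.prod_div_distrib]
    rw [hdprod, hgprod]
    field_simp
  rw [hSn]
  have hc0 : s * (s - 1) / d 1 ≤ 0 :=
    div_nonpos_of_nonpos_of_nonneg (by nlinarith) hd1.le
  have hcd : (s * (s - 1) / d 1) * d 1 = s * (s - 1) := div_mul_cancel₀ _ (ne_of_gt hd1)
  have hlow : s * (s - 1) ≤ (s * (s - 1) / d 1) * U 1 := by
    have := mul_le_mul_of_nonpos_left hU1p hc0
    linarith [hcd, this]
  have hhigh : (s * (s - 1) / d 1) * U 1 ≤ -(s * (s - 1)) := by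
    have h2 : (s * (s - 1) / d 1) * -(d 1) = -(s * (s - 1)) := by
      field_simp
    have := mul_le_mul_of_nonpos_left hU1m hc0
    linarith [h2, this]
  constructor
  · nlinarith
  · nlinarith
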